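/- arXiv:2512.06109 — 3 statements merged into one kernel-verified Lean document; each statement's English description precedes it below -/
import Mathlib

section
/- For a finite measurable space X, a probability measure ρ with full support, a bounded measurable function f, and λ > 0, the unique probability measure minimizing π ↦ E_π[f] + (1/λ)·KL(π‖ρ) over measures π ≪ ρ is the exponentially tilted measure π*(x) = ρ(x)·exp(−λ f(x)) / E_ρ[exp(−λ f)]. -/
open Real Finset

lemma gibbs_aux {X : Type*} [Fintype X] (p q : X → ℝ)
    (hp : ∀ x, 0 < p x) (hq : ∀ x, 0 ≤ q x)
    (hps : ∑ x, p x = 1) (hqs : ∑ x, q x = 1) :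
    0 ≤ ∑ x, q x * Real.log (q x / p x) ∧
      ((∑ x, q x * Real.log (q x / p x)) = 0 → q = p) := by
  have hterm : ∀ x, q x - p x ≤ q x * Real.log (q x / p x) := by
    intro x
    rcases eq_or_lt_of_le (hq x) with h0 | h0
    · simp [← h0]; linarith [(hp x).le]
    · have hpx := hp x
      have hlog : Real.log (p x / q x) ≤ p x / q x - 1 :=
        Real.log_le_sub_one_of_pos (div_pos hpx h0)
      have h1 : q x * Real.log (p x / q x) ≤ p x - q x := by
        calc q x * Real.log (p x / q x) ≤ q x * (p x / q x - 1) :=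
              mul_le_mul_of_nonneg_left hlog h0.le
          _ = p x - q x := by field_simp
      have hneg : Real.log (q x / p x) = - Real.log (p x / q x) := by
        rw [← Real.log_inv, inv_div]
      rw [hneg]; nlinarith
  constructor
  · have h : ∑ x, (q x - p x) ≤ ∑ x, q x * Real.log (q x / p x) :=
      Finset.sum_le_sum fun x _ => hterm x
    have h2 : ∑ x, (q x - p x) = 0 := by
      rw [Finset.sum_sub_distrib, hps, hqs]; ring
    linarith
  · intro hsum
    funext x
    have hg : ∀ y ∈ Finset.univ, 0 ≤ q y * Real.log (q y / p y) - (q y - p y) :=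
      fun y _ => by linarith [hterm y]
    have hzero : ∑ y, (q y * Real.log (q y / p y) - (q y - p y)) = 0 := by
      rw [Finset.sum_sub_distrib, hsum, Finset.sum_sub_distrib, hps, hqs]; ring
    have hx := (Finset.sum_eq_zero_iff_of_nonneg hg).mp hzero x (Finset.mem_univ x)
    have hx' : q x * Real.log (q x / p x) = q x - p x := by linarith
    rcases eq_or_lt_of_le (hq x) with h0 | h0
    · exfalso; rw [← h0] at hx'; simp at hx'; linarith [hp x]
    · by_contra hne
      have hr : p x / q x ≠ 1 := by
        intro h; apply hne
        field_simp at h; linarith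
      have hstrict : Real.log (p x / q x) < p x / q x - 1 :=
        Real.log_lt_sub_one_of_pos (div_pos (hp x) h0) hr
      have h1 : q x * Real.log (p x / q x) < p x - q x := by
        calc q x * Real.log (p x / q x) < q x * (p x / q x - 1) :=
              (mul_lt_mul_iff_right₀ h0).mpr hstrict
          _ = p x - q x := by field_simp
      have hneg : Real.log (q x / p x) = - Real.log (p x / q x) := by
        rw [← Real.log_inv, inv_div]
      rw [hneg] at hx'; nlinarith

/-- For a finite space, a full-support probability measure `ρ`, a function `f`, and `λ > 0`,
the unique minimizer of `q ↦ E_q[f] + (1/λ)·KL(q‖ρ)` over probability measures `q ≪ ρ`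
is the exponentially tilted measure `q*(x) = ρ(x)·exp(-λ f(x)) / E_ρ[exp(-λ f)]`. -/
theorem entropic_risk_unique_minimizer
    {X : Type*} [Fintype X] [Nonempty X]
    (ρ : X → ℝ) (hρ0 : ∀ x, 0 < ρ x) (hρ1 : ∑ x, ρ x = 1)
    (f : X → ℝ) (l : ℝ) (hl : 0 < l) :
    ∀ q : X → ℝ,
      (∀ x, 0 ≤ q x) → (∑ x, q x = 1) → (∀ x, ρ x = 0 → q x = 0) →
      ((∑ x, (fun y => ρ y * Real.exp (-l * f y) / ∑ z, ρ z * Real.exp (-l * f z)) x * f x)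
          + (1 / l) * ∑ x,
              (fun y => ρ y * Real.exp (-l * f y) / ∑ z, ρ z * Real.exp (-l * f z)) x *
                Real.log
                  ((fun y => ρ y * Real.exp (-l * f y) / ∑ z, ρ z * Real.exp (-l * f z)) x / ρ x)
        ≤ (∑ x, q x * f x) + (1 / l) * ∑ x, q x * Real.log (q x / ρ x))
      ∧ ((∑ x, q x * f x) + (1 / l) * ∑ x, q x * Real.log (q x / ρ x)
            = (∑ x, (fun y => ρ y * Real.exp (-l * f y) / ∑ z, ρ z * Real.exp (-l * f z)) x * f x)
              + (1 / l) * ∑ x,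
                  (fun y => ρ y * Real.exp (-l * f y) / ∑ z, ρ z * Real.exp (-l * f z)) x *
                    Real.log
                      ((fun y => ρ y * Real.exp (-l * f y) / ∑ z, ρ z * Real.exp (-l * f z)) x / ρ x)
          → q = fun y => ρ y * Real.exp (-l * f y) / ∑ z, ρ z * Real.exp (-l * f z)) := by
  intro q hq0 hq1 _
  set Z : ℝ := ∑ z, ρ z * Real.exp (-l * f z) with hZdef
  have hZ : 0 < Z := Finset.sum_pos (fun z _ => mul_pos (hρ0 z) (Real.exp_pos _))
    Finset.univ_nonempty
  set p : X → ℝ := fun y => ρ y * Real.exp (-l * f y) / Z with hpdef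
  have hp0 : ∀ x, 0 < p x := fun x => div_pos (mul_pos (hρ0 x) (Real.exp_pos _)) hZ
  have hp1 : ∑ x, p x = 1 := by
    rw [hpdef, ← Finset.sum_div, ← hZdef, div_self hZ.ne']
  -- key identity
  have key : ∀ r : X → ℝ, (∀ x, 0 ≤ r x) → (∑ x, r x = 1) →
      (∑ x, r x * f x) + (1 / l) * ∑ x, r x * Real.log (r x / ρ x)
        = (1 / l) * (∑ x, r x * Real.log (r x / p x)) - Real.log Z / l := by
    intro r hr0 hr1
    have hterm : ∀ x, r x * Real.log (r x / ρ x)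
        = r x * Real.log (r x / p x) + r x * (-l * f x - Real.log Z) := by
      intro x
      rcases eq_or_lt_of_le (hr0 x) with h0 | h0
      · rw [← h0]; ring
      · have hρx := hρ0 x
        have hpx := hp0 x
        have hpr : p x / ρ x = Real.exp (-l * f x) / Z := by
          rw [hpdef]; field_simp
        have hsplit : r x / ρ x = (r x / p x) * (p x / ρ x) := by
          field_simp
        rw [hsplit, Real.log_mul (div_pos h0 hpx).ne' (div_pos hpx hρx).ne', hpr,
          Real.log_div (Real.exp_ne_zero _) hZ.ne', Real.log_exp]
        ring
    have hsum : ∑ x, r x * Real.log (r x / ρ x)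
        = (∑ x, r x * Real.log (r x / p x)) + ((-l) * ∑ x, r x * f x - Real.log Z) := by
      calc ∑ x, r x * Real.log (r x / ρ x)
          = ∑ x, (r x * Real.log (r x / p x) + r x * (-l * f x - Real.log Z)) :=
            Finset.sum_congr rfl fun x _ => hterm x
        _ = (∑ x, r x * Real.log (r x / p x))
              + ((-l) * ∑ x, r x * f x - Real.log Z * ∑ x, r x) := by
            rw [Finset.sum_add_distrib, Finset.mul_sum, Finset.mul_sum, ← Finset.sum_sub_distrib]
            congr 1
            exact Finset.sum_congr rfl fun x _ => by ring
        _ = (∑ x, r x * Real.log (r x / p x)) + ((-l) * ∑ x, r x * f x - Real.log Z) := by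
            rw [hr1, mul_one]
    rw [hsum]
    field_simp
    ring
  have hgibbs := gibbs_aux p q hp0 hq0 hp1 hq1
  have hplog : ∑ x, p x * Real.log (p x / p x) = 0 :=
    Finset.sum_eq_zero fun x _ => by rw [div_self (hp0 x).ne', Real.log_one, mul_zero]
  have hobjp : (∑ x, p x * f x) + (1 / l) * ∑ x, p x * Real.log (p x / ρ x)
      = - (Real.log Z / l) := by
    rw [key p (fun x => (hp0 x).le) hp1, hplog]; ring
  have hobjq := key q hq0 hq1
  constructor
  · show (∑ x, p x * f x) + (1 / l) * ∑ x, p x * Real.log (p x / ρ x)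
        ≤ (∑ x, q x * f x) + (1 / l) * ∑ x, q x * Real.log (q x / ρ x)
    rw [hobjp, hobjq]
    have := mul_nonneg (le_of_lt (one_div_pos.mpr hl)) hgibbs.1
    linarith
  · intro heq
    have heq' : (∑ x, q x * f x) + (1 / l) * ∑ x, q x * Real.log (q x / ρ x)
        = (∑ x, p x * f x) + (1 / l) * ∑ x, p x * Real.log (p x / ρ x) := heq
    rw [hobjp, hobjq] at heq'
    have hS : ∑ x, q x * Real.log (q x / p x) = 0 := by
      have hl' : (1:ℝ)/l ≠ 0 := by positivity
      have : (1 / l) * (∑ x, q x * Real.log (q x / p x)) = 0 := by linarith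
      exact (mul_eq_zero.mp this).resolve_left hl'
    exact hgibbs.2 hS
end

section
/- For a finite measurable space X, a probability measure ρ, a bounded measurable function f, and λ < 0, the supremum over probability measures π ≪ ρ of E_π[f] + (1/λ)·KL(π‖ρ) equals −(1/λ)·log E_ρ[exp(−λ f)], and it is attained at π* = ρ·exp(−λ f)/E_ρ[exp(−λ f)]. -/
open Real Finset

/-- Risk-averse dual representation (`λ < 0`): the supremum over probability measures
`q ≪ ρ` of `E_q[f] + (1/λ)·KL(q‖ρ)` equals `-(1/λ)·log E_ρ[exp(-λ f)]`, and it is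
attained at the tilted measure `q* = ρ·exp(-λ f)/E_ρ[exp(-λ f)]`. -/
theorem entropic_risk_dual_sup_attained
    {X : Type*} [Fintype X] [Nonempty X]
    (ρ : X → ℝ) (hρ0 : ∀ x, 0 ≤ ρ x) (hρ1 : ∑ x, ρ x = 1)
    (f : X → ℝ) (l : ℝ) (hl : l < 0) :
    IsGreatest
      {v : ℝ | ∃ q : X → ℝ,
        (∀ x, 0 ≤ q x) ∧ (∑ x, q x = 1) ∧ (∀ x, ρ x = 0 → q x = 0) ∧
        v = (∑ x, q x * f x) + (1 / l) * ∑ x, q x * Real.log (q x / ρ x)}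
      (-(1 / l) * Real.log (∑ x, ρ x * Real.exp (-l * f x)))
    ∧
    (∑ x, (ρ x * Real.exp (-l * f x) / ∑ z, ρ z * Real.exp (-l * f z)) * f x)
      + (1 / l) * ∑ x, (ρ x * Real.exp (-l * f x) / ∑ z, ρ z * Real.exp (-l * f z)) *
          Real.log ((ρ x * Real.exp (-l * f x) / ∑ z, ρ z * Real.exp (-l * f z)) / ρ x)
      = -(1 / l) * Real.log (∑ x, ρ x * Real.exp (-l * f x)) := by
  set Z : ℝ := ∑ z, ρ z * Real.exp (-l * f z) with hZdef
  have hlne : l ≠ 0 := ne_of_lt hl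
  have hterm : ∀ x, 0 ≤ ρ x * Real.exp (-l * f x) :=
    fun x => mul_nonneg (hρ0 x) (Real.exp_pos _).le
  have hZpos : 0 < Z := by
    obtain ⟨x, hx⟩ : ∃ x, 0 < ρ x := by
      by_contra h
      push_neg at h
      have hz : ∀ x, ρ x = 0 := fun x => le_antisymm (h x) (hρ0 x)
      simp [hz] at hρ1
    exact Finset.sum_pos' (fun x _ => hterm x)
      ⟨x, Finset.mem_univ x, mul_pos hx (Real.exp_pos _)⟩
  set q : X → ℝ := fun x => ρ x * Real.exp (-l * f x) / Z with hqdef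
  have hqx : ∀ x, q x = ρ x * Real.exp (-l * f x) / Z := fun x => rfl
  have hq0 : ∀ x, 0 ≤ q x := fun x => div_nonneg (hterm x) hZpos.le
  have hq1 : ∑ x, q x = 1 := by
    rw [show (∑ x, q x) = (∑ x, ρ x * Real.exp (-l * f x)) / Z from by
      rw [← Finset.sum_div]]
    exact div_self hZpos.ne'
  have hqac : ∀ x, ρ x = 0 → q x = 0 := by
    intro x hx; rw [hqx x, hx, zero_mul, zero_div]
  have hqpos : ∀ x, 0 < ρ x → 0 < q x := fun x hx =>
    div_pos (mul_pos hx (Real.exp_pos _)) hZpos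
  -- attainment equation
  have hlog : ∀ x, q x * Real.log (q x / ρ x) = q x * (-l * f x - Real.log Z) := by
    intro x
    rcases (hρ0 x).eq_or_lt with h | h
    · rw [hqac x h.symm]; ring
    · have hdiv : q x / ρ x = Real.exp (-l * f x) / Z := by
        rw [hqx x]; field_simp
      rw [hdiv, Real.log_div (Real.exp_ne_zero _) hZpos.ne', Real.log_exp]
  have hattain :
      (∑ x, q x * f x) + (1 / l) * ∑ x, q x * Real.log (q x / ρ x)
        = -(1 / l) * Real.log Z := by
    have h1 : ∑ x, q x * Real.log (q x / ρ x)
        = -l * (∑ x, q x * f x) - Real.log Z := by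
      calc ∑ x, q x * Real.log (q x / ρ x)
          = ∑ x, (-l * (q x * f x) - Real.log Z * q x) := by
            refine Finset.sum_congr rfl fun x _ => ?_
            rw [hlog x]; ring
        _ = -l * (∑ x, q x * f x) - Real.log Z := by
            rw [Finset.sum_sub_distrib, ← Finset.mul_sum, ← Finset.mul_sum, hq1, mul_one]
    rw [h1]
    field_simp
    ring
  constructor
  · constructor
    · exact ⟨q, hq0, hq1, hqac, hattain.symm⟩
    · rintro v ⟨p, hp0, hp1, hpac, hv⟩
      have hpρ : ∀ x, 0 < p x → 0 < ρ x := by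
        intro x hx
        rcases (hρ0 x).eq_or_lt with h | h
        · exact absurd (hpac x h.symm) (ne_of_gt hx)
        · exact h
      -- Gibbs: termwise bound
      have key : ∀ x, p x - q x ≤ p x * Real.log (p x / q x) := by
        intro x
        rcases (hp0 x).eq_or_lt with h | h
        · rw [← h, zero_sub, zero_mul]
          exact neg_nonpos.mpr (hq0 x)
        · have hqpx : 0 < q x := hqpos x (hpρ x h)
          have hle : Real.log (q x / p x) ≤ q x / p x - 1 :=
            Real.log_le_sub_one_of_pos (div_pos hqpx h)
          have hflip : Real.log (p x / q x) = -Real.log (q x / p x) := by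
            rw [← Real.log_inv]
            congr 1
            field_simp
          rw [hflip]
          have h2 : 1 - q x / p x ≤ -Real.log (q x / p x) := by linarith
          calc p x - q x = p x * (1 - q x / p x) := by field_simp
            _ ≤ p x * -Real.log (q x / p x) := mul_le_mul_of_nonneg_left h2 h.le
      have hKL : 0 ≤ ∑ x, p x * Real.log (p x / q x) := by
        have hs : ∑ x, (p x - q x) ≤ ∑ x, p x * Real.log (p x / q x) :=
          Finset.sum_le_sum fun x _ => key x
        rwa [Finset.sum_sub_distrib, hp1, hq1, sub_self] at hs
      have hdecomp : ∀ x, p x * Real.log (p x / q x)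
          = p x * Real.log (p x / ρ x) + l * (p x * f x) + Real.log Z * p x := by
        intro x
        rcases (hp0 x).eq_or_lt with h | h
        · rw [← h]; ring
        · have hρx : 0 < ρ x := hpρ x h
          have hqpx : 0 < q x := hqpos x hρx
          have e1 : Real.log (q x) = Real.log (ρ x) + -l * f x - Real.log Z := by
            rw [hqx x, Real.log_div (mul_pos hρx (Real.exp_pos _)).ne' hZpos.ne',
              Real.log_mul hρx.ne' (Real.exp_ne_zero _), Real.log_exp]
          rw [Real.log_div h.ne' hqpx.ne', Real.log_div h.ne' hρx.ne', e1]
          ring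
      have hsum : ∑ x, p x * Real.log (p x / q x)
          = (∑ x, p x * Real.log (p x / ρ x)) + l * (∑ x, p x * f x) + Real.log Z := by
        calc ∑ x, p x * Real.log (p x / q x)
            = ∑ x, (p x * Real.log (p x / ρ x) + l * (p x * f x) + Real.log Z * p x) :=
              Finset.sum_congr rfl fun x _ => hdecomp x
          _ = (∑ x, p x * Real.log (p x / ρ x)) + l * (∑ x, p x * f x) + Real.log Z := by
              rw [Finset.sum_add_distrib, Finset.sum_add_distrib, ← Finset.mul_sum,
                ← Finset.mul_sum, hp1, mul_one]
      set S : ℝ := ∑ x, p x * f x with hS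
      set A : ℝ := ∑ x, p x * Real.log (p x / ρ x) with hA
      have hX : 0 ≤ A + l * S + Real.log Z := by rw [hsum] at hKL; linarith
      have h1l : 1 / l < 0 := div_neg_of_pos_of_neg one_pos hl
      have h2 : (1 / l) * (A + l * S + Real.log Z) ≤ 0 :=
        mul_nonpos_iff.mpr (Or.inr ⟨h1l.le, hX⟩)
      have key2 : (1 / l) * A + S + (1 / l) * Real.log Z ≤ 0 := by
        calc (1 / l) * A + S + (1 / l) * Real.log Z
            = (1 / l) * (A + l * S + Real.log Z) := by field_simp
          _ ≤ 0 := h2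
      rw [hv]
      linarith
  · exact hattain
end

section
/- (Compositionality of desirability functions) If the terminal desirability decomposes as z_T = Σ_{n=1}^N z_T^{(n)} and each z_t^{(n)} satisfies the linear backward recursion z_t^{(n)}(x) = E_{u∼ρ_t(·|x)}[e^{−λ c_t(x,u)} E_{x'∼ι_t(·|x,u)}[z_{t+1}^{(n)}(x')]], then z_t = Σ_{n=1}^N z_t^{(n)} for all t = 0,…,T, where z_t satisfies the same recursion with terminal condition z_T. -/
open Real Finset

/-- Compositionality of desirability functions: if the terminal desirability decomposes as
`z_T = Σ_n z_T^{(n)}` with `z_T^{(n)} = γ_n exp(-λ c_T^{(n)})`, `γ_n > 0`, and both `z`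
and each `z^{(n)}` satisfy the linear backward recursion
`z_t(x) = E_{u∼ρ_t(·|x)}[exp(-λ c_t(x,u)) E_{x'∼ι_t(·|x,u)}[z_{t+1}(x')]]`,
then `z_t = Σ_n z_t^{(n)}` for all `t ≤ T`. -/
theorem desirability_compositionality
    {S U : Type*} [Fintype S] [Fintype U] [Nonempty S] [Nonempty U]
    (T : ℕ) (N : ℕ) (l : ℝ) (hl : 0 < l)
    (ρ : ℕ → S → U → ℝ) (hρ0 : ∀ t x u, 0 ≤ ρ t x u) (hρ1 : ∀ t x, ∑ u, ρ t x u = 1)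
    (ι : ℕ → S → U → S → ℝ) (hι0 : ∀ t x u x', 0 ≤ ι t x u x')
    (hι1 : ∀ t x u, ∑ x', ι t x u x' = 1)
    (c : ℕ → S → U → ℝ) (cT : Fin N → S → ℝ) (γ : Fin N → ℝ) (hγ : ∀ n, 0 < γ n)
    (z : ℕ → S → ℝ) (zn : Fin N → ℕ → S → ℝ)
    (hznT : ∀ n x, zn n T x = γ n * Real.exp (-l * cT n x))
    (hzT : ∀ x, z T x = ∑ n, zn n T x)
    (hznrec : ∀ n t, t < T → ∀ x,
      zn n t x
        = ∑ u, ρ t x u * (Real.exp (-l * c t x u) * ∑ x', ι t x u x' * zn n (t + 1) x'))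
    (hzrec : ∀ t, t < T → ∀ x,
      z t x = ∑ u, ρ t x u * (Real.exp (-l * c t x u) * ∑ x', ι t x u x' * z (t + 1) x')) :
    ∀ t, t ≤ T → ∀ x, z t x = ∑ n, zn n t x := by
  suffices h : ∀ d t, t + d = T → ∀ x, z t x = ∑ n, zn n t x by
    intro t ht x
    exact h (T - t) t (Nat.add_sub_cancel' ht) x
  intro d
  induction d with
  | zero => intro t ht x; simp at ht; subst ht; exact hzT x
  | succ d ih =>
    intro t ht x
    have hlt : t < T := by omega
    have ih' : ∀ x, z (t + 1) x = ∑ n, zn n (t + 1) x := ih (t + 1) (by omega)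
    rw [hzrec t hlt x]
    rw [Finset.sum_congr rfl fun n _ => hznrec n t hlt x]
    rw [Finset.sum_comm]
    refine Finset.sum_congr rfl fun u _ => ?_
    rw [← Finset.mul_sum]
    congr 1
    rw [← Finset.mul_sum]
    congr 1
    simp_rw [ih', Finset.mul_sum]
    exact Finset.sum_comm
end
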